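/- For integers d ≥ 2 and n ≥ 1, the polynomial (1 + t + t^2 + ... + t^{d-2})^{n+1} has a log-concave sequence of coefficients. -/

import Mathlib

open Polynomial

section Aux

open Finset

/-- Extension of the coefficient sequence of a polynomial to `ℤ`. -/
noncomputable def ae (p : Polynomial ℝ) (z : ℤ) : ℝ :=
  if 0 ≤ z then p.coeff z.toNat else 0

lemma ae_neg (p : Polynomial ℝ) {z : ℤ} (hz : z < 0) : ae p z = 0 := by
  simp [ae, not_le.2 hz]

lemma ae_nonnegz (p : Polynomial ℝ) {z : ℤ} (hz : 0 ≤ z) : ae p z = p.coeff z.toNat := by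
  simp [ae, hz]

/-- The strong (two-index) log-concavity property. -/
def GenLC (a : ℤ → ℝ) : Prop := ∀ x y : ℤ, x ≤ y → a (x - 1) * a (y + 1) ≤ a x * a y

/-- Lemma A: pointwise log-concavity + positivity on `[0,N]` + vanishing outside gives GenLC. -/
lemma genLC_of_lc (a : ℤ → ℝ) (N : ℤ)
    (h0 : ∀ z : ℤ, z < 0 → a z = 0) (hN : ∀ z : ℤ, N < z → a z = 0)
    (hpos : ∀ z : ℤ, 0 ≤ z → z ≤ N → 0 < a z)
    (hlc : ∀ z : ℤ, a (z - 1) * a (z + 1) ≤ a z ^ 2) : GenLC a := by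
  have hnn : ∀ z : ℤ, 0 ≤ a z := by
    intro z
    rcases lt_or_ge z 0 with h | h
    · simp [h0 z h]
    rcases le_or_gt z N with h2 | h2
    · exact (hpos z h h2).le
    · simp [hN z h2]
  intro x y hxy
  rcases le_or_gt x 0 with hx | hx
  · rw [h0 (x-1) (by omega)]
    simpa using mul_nonneg (hnn x) (hnn y)
  rcases le_or_gt N y with hy | hy
  · rw [hN (y+1) (by omega)]
    simpa using mul_nonneg (hnn x) (hnn y)
  -- now 1 ≤ x ≤ y ≤ N - 1
  have key : ∀ y : ℤ, x ≤ y → y < N → a (x - 1) * a (y + 1) ≤ a x * a y := by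
    refine fun y hy => Int.le_induction (motive := fun y _ => y < N → a (x - 1) * a (y + 1) ≤ a x * a y) ?_ ?_ y hy
    · intro _
      nlinarith [hlc x]
    · intro y hxy2 ih hyN
      have ihy : a (x - 1) * a (y + 1) ≤ a x * a y := by
        rcases lt_or_ge y N with h | h
        · exact ih h
        · rw [hN (y+1) (by omega)]
          simpa using mul_nonneg (hnn x) (hnn y)
      have hl : a y * a (y + 2) ≤ a (y+1) ^ 2 := by
        have := hlc (y + 1)
        simpa [show y + 1 - 1 = y by ring, show y + 1 + 1 = y + 2 by ring] using this
      have h1 : (a (x-1) * a (y+1)) * (a y * a (y+2)) ≤ (a x * a y) * (a (y+1) ^ 2) :=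
        mul_le_mul ihy hl (mul_nonneg (hnn _) (hnn _)) (mul_nonneg (hnn _) (hnn _))
      have hprod : (a (x-1) * a (y + 2)) * (a y * a (y+1)) ≤ (a x * a (y+1)) * (a y * a (y+1)) := by
        nlinarith [hnn (x-1), hnn x, hnn y, hnn (y+1), hnn (y+2)]
      have hpos2 : 0 < a y * a (y + 1) :=
        mul_pos (hpos y (by omega) (by omega)) (hpos (y+1) (by omega) (by omega))
      have := le_of_mul_le_mul_right hprod hpos2
      simpa [show y + 1 + 1 = y + 2 by ring] using this
  rcases lt_or_ge y N with h | h
  · exact key y hxy h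
  · rw [hN (y+1) (by omega)]
    simpa using mul_nonneg (hnn x) (hnn y)

/-- Lemma C: coefficient of a product as a ℤ-indexed convolution over a fixed window. -/
lemma conv_eq (p q : Polynomial ℝ) (M : ℤ) (hM : (p.natDegree : ℤ) ≤ M) (z : ℤ) :
    ae (p * q) z = ∑ i ∈ Finset.Icc (-1 : ℤ) (M + 1), ae p i * ae q (z - i) := by
  have hae_neg : ∀ (r : Polynomial ℝ) (w : ℤ), w < 0 → ae r w = 0 := by
    intro r w hw; simp [ae, not_le.2 hw]
  rcases lt_or_ge z 0 with hz | hz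
  · rw [hae_neg _ _ hz]
    refine (Finset.sum_eq_zero ?_).symm
    intro i hi
    rcases lt_or_ge i 0 with h | h
    · rw [hae_neg p i h, zero_mul]
    · rw [hae_neg q (z - i) (by omega), mul_zero]
  · -- common superset
    set T : Finset ℤ := Finset.Icc (-1 : ℤ) (max (M + 1) z) with hT
    have h1 : ∑ i ∈ Finset.Icc (-1 : ℤ) (M + 1), ae p i * ae q (z - i)
        = ∑ i ∈ T, ae p i * ae q (z - i) := by
      refine Finset.sum_subset ?_ ?_
      · intro i hi
        simp only [hT, Finset.mem_Icc, le_max_iff] at hi ⊢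
        omega
      · intro i hiT hi
        simp only [Finset.mem_Icc, le_max_iff, hT] at hiT hi
        have hip : M + 1 < i := by omega
        have : p.natDegree < i.toNat := by omega
        rw [ae, if_pos (by omega), Polynomial.coeff_eq_zero_of_natDegree_lt this, zero_mul]
    have h2 : ∑ i ∈ Finset.Icc (0 : ℤ) z, ae p i * ae q (z - i)
        = ∑ i ∈ T, ae p i * ae q (z - i) := by
      refine Finset.sum_subset ?_ ?_
      · intro i hi
        simp only [hT, Finset.mem_Icc, le_max_iff] at hi ⊢
        omega
      · intro i hiT hi
        simp only [Finset.mem_Icc, le_max_iff, hT] at hiT hi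
        rcases lt_or_ge i 0 with h | h
        · rw [hae_neg p i h, zero_mul]
        · rw [hae_neg q (z - i) (by omega), mul_zero]
    rw [h1, ← h2]
    -- now compute via coeff_mul
    rw [ae, if_pos hz, Polynomial.coeff_mul]
    rw [Finset.Nat.sum_antidiagonal_eq_sum_range_succ_mk]
    refine Finset.sum_nbij' (fun i => (i : ℤ)) (fun i => i.toNat) ?_ ?_ ?_ ?_ ?_
    · intro i hi
      simp only [Finset.mem_range] at hi
      simp only [Finset.mem_Icc]
      omega
    · intro i hi
      simp only [Finset.mem_Icc] at hi
      simp only [Finset.mem_range]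
      omega
    · intro i hi
      simp only [Finset.mem_range] at hi
      simp
    · intro i hi
      simp only [Finset.mem_Icc] at hi
      simp only [Int.toNat_of_nonneg hi.1]
    · intro i hi
      simp only [Finset.mem_range] at hi
      simp only [ae]
      rw [if_pos (by omega), if_pos (by omega)]
      have e1 : ((i : ℤ)).toNat = i := by omega
      have e2 : ((z - (i : ℤ))).toNat = z.toNat - i := by omega
      rw [e1, e2]

lemma lc_conv (a b : ℤ → ℝ) (Na : ℤ)
    (hann : ∀ z, 0 ≤ a z) (hbnn : ∀ z, 0 ≤ b z)
    (hga : GenLC a) (hgb : GenLC b)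
    (ha0 : ∀ z : ℤ, z < 0 → a z = 0) (haN : ∀ z : ℤ, Na < z → a z = 0)
    (c : ℤ → ℝ) (hc : ∀ m : ℤ, c m = ∑ i ∈ Finset.Icc (-1 : ℤ) (Na + 1), a i * b (m - i)) :
    ∀ k : ℤ, c (k - 1) * c (k + 1) ≤ c k ^ 2 := by
  intro k
  set s : Finset ℤ := Finset.Icc (-1 : ℤ) (Na + 1) with hs
  -- shift lemma
  have shift : ∀ m : ℤ, ∑ i ∈ s, a (i + 1) * b (m - 1 - i) = c m := by
    intro m
    have hmap : (Finset.Icc (-1 : ℤ) (Na + 1)).map (addRightEmbedding 1)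
        = Finset.Icc (0 : ℤ) (Na + 2) := by
      rw [Finset.map_add_right_Icc]
      norm_num
      congr 1
      ring
    have h1 : ∑ i ∈ s, a (i + 1) * b (m - 1 - i)
        = ∑ j ∈ Finset.Icc (0 : ℤ) (Na + 2), a j * b (m - j) := by
      rw [← hmap, Finset.sum_map, hs]
      refine Finset.sum_congr rfl fun i _ => ?_
      simp only [addRightEmbedding_apply]
      congr 1
      ring_nf
    have hbig : ∀ t : Finset ℤ, t ⊆ Finset.Icc (-1 : ℤ) (Na + 2) →
        (∀ i : ℤ, i ∈ Finset.Icc (-1 : ℤ) (Na + 2) → i ∉ t → a i = 0) →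
        ∑ i ∈ t, a i * b (m - i) = ∑ i ∈ Finset.Icc (-1 : ℤ) (Na + 2), a i * b (m - i) := by
      intro t ht hz
      refine Finset.sum_subset ht fun i hi hit => ?_
      rw [hz i hi hit, zero_mul]
    have h2 : ∑ i ∈ Finset.Icc (0 : ℤ) (Na + 2), a i * b (m - i)
        = ∑ i ∈ Finset.Icc (-1 : ℤ) (Na + 2), a i * b (m - i) := by
      refine hbig _ ?_ ?_
      · intro i hi; simp only [Finset.mem_Icc] at hi ⊢; omega
      · intro i hi hit
        simp only [Finset.mem_Icc] at hi hit
        exact ha0 i (by omega)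
    have h3 : ∑ i ∈ Finset.Icc (-1 : ℤ) (Na + 1), a i * b (m - i)
        = ∑ i ∈ Finset.Icc (-1 : ℤ) (Na + 2), a i * b (m - i) := by
      refine hbig _ ?_ ?_
      · intro i hi; simp only [Finset.mem_Icc] at hi ⊢; omega
      · intro i hi hit
        simp only [Finset.mem_Icc] at hi hit
        exact haN i (by omega)
    rw [h1, h2, hc m, hs, h3]
  set G : ℤ → ℤ → ℝ := fun i j =>
    (a (i + 1) * a j - a (j + 1) * a i) * (b (k - 1 - i) * b (k - j) - b (k - i) * b (k - 1 - j))
    with hG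
  have hGnn : ∀ i j : ℤ, 0 ≤ G i j := by
    have key : ∀ i j : ℤ, i ≤ j → 0 ≤ G i j := by
      intro i j hij
      rcases eq_or_lt_of_le hij with rfl | hlt
      · simp [hG]
      · have h1 : 0 ≤ a (i + 1) * a j - a (j + 1) * a i := by
          have := hga (i + 1) j (by omega)
          simp only [add_sub_cancel_right] at this
          linarith
        have h2 : 0 ≤ b (k - 1 - i) * b (k - j) - b (k - i) * b (k - 1 - j) := by
          have := hgb (k - j) (k - 1 - i) (by omega)
          have e1 : k - j - 1 = k - 1 - j := by ring
          have e2 : k - 1 - i + 1 = k - i := by ring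
          rw [e1, e2] at this
          nlinarith [this]
        simp only [hG]
        exact mul_nonneg h1 h2
    intro i j
    rcases le_or_gt i j with h | h
    · exact key i j h
    · have : G i j = G j i := by simp only [hG]; ring
      rw [this]; exact key j i h.le
  -- the four one-variable sums
  have S1 : ∑ j ∈ s, a j * b (k - j) = c k := (hc k).symm
  have S2 : ∑ j ∈ s, a j * b (k - 1 - j) = c (k - 1) := (hc (k - 1)).symm
  have S3 : ∑ j ∈ s, a (j + 1) * b (k - 1 - j) = c k := shift k
  have S4 : ∑ j ∈ s, a (j + 1) * b (k - j) = c (k + 1) := by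
    have := shift (k + 1)
    simp only [add_sub_cancel_right] at this
    exact this
  have expand : ∑ i ∈ s, ∑ j ∈ s, G i j = 2 * (c k ^ 2 - c (k - 1) * c (k + 1)) := by
    have e : ∀ i j : ℤ, G i j =
        a (i + 1) * b (k - 1 - i) * (a j * b (k - j))
        - a (i + 1) * b (k - i) * (a j * b (k - 1 - j))
        - a i * b (k - 1 - i) * (a (j + 1) * b (k - j))
        + a i * b (k - i) * (a (j + 1) * b (k - 1 - j)) := by
      intro i j; simp only [hG]; ring
    calc ∑ i ∈ s, ∑ j ∈ s, G i j
        = ∑ i ∈ s, (a (i + 1) * b (k - 1 - i) * c k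
          - a (i + 1) * b (k - i) * c (k - 1)
          - a i * b (k - 1 - i) * c (k + 1)
          + a i * b (k - i) * c k) := by
          refine Finset.sum_congr rfl fun i _ => ?_
          simp only [e, Finset.sum_add_distrib, Finset.sum_sub_distrib, ← Finset.mul_sum]
          rw [S1, S2, S3, S4]
      _ = (∑ i ∈ s, a (i + 1) * b (k - 1 - i)) * c k
          - (∑ i ∈ s, a (i + 1) * b (k - i)) * c (k - 1)
          - (∑ i ∈ s, a i * b (k - 1 - i)) * c (k + 1)
          + (∑ i ∈ s, a i * b (k - i)) * c k := by
          simp only [Finset.sum_add_distrib, Finset.sum_sub_distrib, ← Finset.sum_mul]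
      _ = 2 * (c k ^ 2 - c (k - 1) * c (k + 1)) := by
          rw [S1, S2, S3, S4]; ring
  have hnn : 0 ≤ ∑ i ∈ s, ∑ j ∈ s, G i j :=
    Finset.sum_nonneg fun i _ => Finset.sum_nonneg fun j _ => hGnn i j
  nlinarith [expand, hnn]

lemma coeff_base (e k : ℕ) :
    ((∑ i ∈ Finset.range e, (X : Polynomial ℝ) ^ i)).coeff k = if k < e then 1 else 0 := by
  rw [Polynomial.finset_sum_coeff]
  simp only [Polynomial.coeff_X_pow]
  rw [Finset.sum_ite_eq (Finset.range e) k (fun _ => (1:ℝ))]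
  simp [Finset.mem_range]

lemma natDegree_base_le (e : ℕ) :
    ((∑ i ∈ Finset.range e, (X : Polynomial ℝ) ^ i)).natDegree ≤ e - 1 := by
  refine Polynomial.natDegree_sum_le_of_forall_le _ _ fun i hi => ?_
  simp only [Finset.mem_range] at hi
  calc ((X : Polynomial ℝ) ^ i).natDegree ≤ i := Polynomial.natDegree_pow_le.trans (by simp)
    _ ≤ e - 1 := by omega

lemma coeff_pow_nonneg (e : ℕ) : ∀ m k : ℕ,
    0 ≤ (((∑ i ∈ Finset.range e, (X : Polynomial ℝ) ^ i)) ^ m).coeff k := by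
  intro m
  induction m with
  | zero => intro k; simp [Polynomial.coeff_one]; split <;> norm_num
  | succ m ih =>
      intro k
      rw [pow_succ, Polynomial.coeff_mul]
      refine Finset.sum_nonneg fun x _ => mul_nonneg (ih x.1) ?_
      rw [coeff_base]
      split <;> norm_num

lemma coeff_pow_pos (e : ℕ) (he : 1 ≤ e) : ∀ m : ℕ, 1 ≤ m → ∀ k : ℕ, k ≤ m * (e - 1) →
    0 < (((∑ i ∈ Finset.range e, (X : Polynomial ℝ) ^ i)) ^ m).coeff k := by
  intro m hm
  induction m, hm using Nat.le_induction with
  | base =>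
      intro k hk
      rw [pow_one, coeff_base, if_pos (by omega)]
      norm_num
  | succ m hm ih =>
      intro k hk
      have hk' : k ≤ m * (e - 1) + (e - 1) := by
        rwa [Nat.succ_mul] at hk
      rw [pow_succ, Polynomial.coeff_mul]
      have hx : min k (m * (e - 1)) + (k - min k (m * (e - 1))) = k := by omega
      refine Finset.sum_pos' (fun x _ => mul_nonneg (coeff_pow_nonneg e m x.1) ?_)
        ⟨(min k (m * (e - 1)), k - min k (m * (e - 1))), ?_, ?_⟩
      · rw [coeff_base]; split <;> norm_num
      · simp [Finset.mem_antidiagonal, hx]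
      · refine mul_pos (ih _ (by omega)) ?_
        rw [coeff_base, if_pos (by omega)]
        norm_num


noncomputable def basePoly (e : ℕ) : Polynomial ℝ := ∑ i ∈ Finset.range e, (X : Polynomial ℝ) ^ i

lemma natDegree_basePow_le (e m : ℕ) : ((basePoly e) ^ m).natDegree ≤ m * (e - 1) :=
  (Polynomial.natDegree_pow_le).trans (Nat.mul_le_mul_left m (natDegree_base_le e))

lemma ae_pow_vanish (e m : ℕ) : ∀ z : ℤ, ((m * (e - 1) : ℕ) : ℤ) < z →
    ae ((basePoly e) ^ m) z = 0 := by
  intro z hz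
  rw [ae_nonnegz _ (by omega)]
  exact Polynomial.coeff_eq_zero_of_natDegree_lt
    (lt_of_le_of_lt (natDegree_basePow_le e m) (by omega))

lemma ae_pow_nonneg (e m : ℕ) : ∀ z : ℤ, 0 ≤ ae ((basePoly e) ^ m) z := by
  intro z
  rcases lt_or_ge z 0 with h | h
  · rw [ae_neg _ h]
  · rw [ae_nonnegz _ h]; exact coeff_pow_nonneg e m _

lemma ae_pow_pos (e : ℕ) (he : 1 ≤ e) (m : ℕ) (hm : 1 ≤ m) :
    ∀ z : ℤ, 0 ≤ z → z ≤ ((m * (e - 1) : ℕ) : ℤ) → 0 < ae ((basePoly e) ^ m) z := by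
  intro z h0 h1
  rw [ae_nonnegz _ h0]
  exact coeff_pow_pos e he m hm _ (by omega)

lemma ae_base_eq (e : ℕ) (z : ℤ) :
    ae (basePoly e) z = if 0 ≤ z ∧ z < (e : ℤ) then 1 else 0 := by
  rcases lt_or_ge z 0 with h | h
  · rw [ae_neg _ h, if_neg (by omega)]
  · rw [ae_nonnegz _ h, basePoly, coeff_base]
    by_cases hlt : z.toNat < e
    · rw [if_pos hlt, if_pos (by omega)]
    · rw [if_neg hlt, if_neg (by omega)]

lemma lc_base (e : ℕ) : ∀ z : ℤ,
    ae (basePoly e) (z - 1) * ae (basePoly e) (z + 1) ≤ ae (basePoly e) z ^ 2 := by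
  intro z
  rw [ae_base_eq, ae_base_eq, ae_base_eq]
  split_ifs with h1 h2 h3 h3 <;> norm_num <;> omega

/-- Main induction: pointwise log-concavity of `ae ((basePoly e) ^ m)`. -/
lemma lc_pow (e : ℕ) (he : 1 ≤ e) : ∀ m : ℕ, 1 ≤ m → ∀ z : ℤ,
    ae ((basePoly e) ^ m) (z - 1) * ae ((basePoly e) ^ m) (z + 1)
      ≤ ae ((basePoly e) ^ m) z ^ 2 := by
  intro m hm
  induction m, hm using Nat.le_induction with
  | base => intro z; simpa [pow_one] using lc_base e z
  | succ m hm ih =>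
      have hga : GenLC (ae (basePoly e)) := by
        refine genLC_of_lc _ ((e : ℤ) - 1) (fun z hz => ae_neg _ hz) ?_ ?_ (lc_base e)
        · intro z hz
          have := ae_pow_vanish e 1 z (by push_cast; omega)
          simpa [pow_one] using this
        · intro z h0 h1
          have := ae_pow_pos e he 1 le_rfl z h0 (by push_cast; omega)
          simpa [pow_one] using this
      have hgb : GenLC (ae ((basePoly e) ^ m)) :=
        genLC_of_lc _ ((m * (e - 1) : ℕ) : ℤ) (fun z hz => ae_neg _ hz)
          (ae_pow_vanish e m) (ae_pow_pos e he m hm) ih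
      have hpowsucc : (basePoly e) ^ (m + 1) = basePoly e * (basePoly e) ^ m := by
        rw [pow_succ, mul_comm]
      have hc : ∀ w : ℤ, ae ((basePoly e) ^ (m + 1)) w
          = ∑ i ∈ Finset.Icc (-1 : ℤ) (((e : ℤ) - 1) + 1), ae (basePoly e) i
              * ae ((basePoly e) ^ m) (w - i) := by
        intro w
        rw [hpowsucc]
        exact conv_eq (basePoly e) ((basePoly e) ^ m) ((e : ℤ) - 1)
          (by have h : (basePoly e).natDegree ≤ e - 1 := natDegree_base_le e
              push_cast
              omega) w
      intro z
      have := lc_conv (ae (basePoly e)) (ae ((basePoly e) ^ m)) ((e : ℤ) - 1)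
        (fun w => by simpa [pow_one] using ae_pow_nonneg e 1 w) (ae_pow_nonneg e m)
        hga hgb (fun w hw => ae_neg _ hw)
        (fun w hw => by
          have := ae_pow_vanish e 1 w (by push_cast; omega)
          simpa [pow_one] using this)
        (ae ((basePoly e) ^ (m + 1))) hc z
      nlinarith [this]

end Aux

/-- For integers `d ≥ 2` and `n ≥ 1`, the polynomial `(1 + t + ⋯ + t^{d-2})^{n+1}`
has a log-concave coefficient sequence: `a (k-1) * a (k+1) ≤ a k ^ 2` for all `k ≥ 1`. -/
theorem stmt6 (d n : ℕ) (hd : 2 ≤ d) (hn : 1 ≤ n) :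
    ∀ k, 1 ≤ k →
      ((∑ i ∈ Finset.range (d - 1), (X : Polynomial ℝ) ^ i) ^ (n + 1)).coeff (k - 1)
        * ((∑ i ∈ Finset.range (d - 1), (X : Polynomial ℝ) ^ i) ^ (n + 1)).coeff (k + 1)
      ≤ (((∑ i ∈ Finset.range (d - 1), (X : Polynomial ℝ) ^ i) ^ (n + 1)).coeff k) ^ 2 := by
  intro k hk
  have key := lc_pow (d - 1) (by omega) (n + 1) (by omega) (k : ℤ)
  have h1 : ae ((basePoly (d - 1)) ^ (n + 1)) ((k : ℤ) - 1)
      = ((basePoly (d - 1)) ^ (n + 1)).coeff (k - 1) := by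
    rw [ae_nonnegz _ (by omega)]
    congr 1
    all_goals omega
  have h2 : ae ((basePoly (d - 1)) ^ (n + 1)) ((k : ℤ) + 1)
      = ((basePoly (d - 1)) ^ (n + 1)).coeff (k + 1) := by
    rw [ae_nonnegz _ (by omega)]
    congr 1
    all_goals omega
  have h3 : ae ((basePoly (d - 1)) ^ (n + 1)) (k : ℤ)
      = ((basePoly (d - 1)) ^ (n + 1)).coeff k := by
    rw [ae_nonnegz _ (by omega)]
    congr 1
    all_goals omega
  rw [h1, h2, h3] at key
  exact key
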